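/- arXiv:2312.15546 — 3 statements merged into one kernel-verified Lean document; each statement's English description precedes it below -/
import Mathlib

section
/- If A is an N×N complex matrix with numerical radius r(A) ≤ 1, then the operator norm of every power satisfies ‖Aⁿ‖ ≤ 2 for all n ≥ 1. -/
noncomputable def opNorm {N : ℕ} (A : Matrix (Fin N) (Fin N) ℂ) : ℝ :=
  ‖Matrix.toEuclideanCLM (𝕜 := ℂ) A‖

noncomputable def numRad {N : ℕ} (A : Matrix (Fin N) (Fin N) ℂ) : ℝ :=
  sSup {r : ℝ | ∃ x : EuclideanSpace ℂ (Fin N), ‖x‖ = 1 ∧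
    r = ‖(inner (𝕜 := ℂ) x (Matrix.toEuclideanCLM (𝕜 := ℂ) A x))‖}

noncomputable def numRange {N : ℕ} (A : Matrix (Fin N) (Fin N) ℂ) : Set ℂ :=
  {z : ℂ | ∃ x : EuclideanSpace ℂ (Fin N), ‖x‖ = 1 ∧
    z = inner (𝕜 := ℂ) x (Matrix.toEuclideanCLM (𝕜 := ℂ) A x)}

open scoped ComplexConjugate

local notation "⟪" x ", " y "⟫" => @inner ℂ _ _ x y

variable {N : ℕ}

/-- phase choice -/
lemma exists_phase (a b : ℂ) : ∃ θ : ℂ, ‖θ‖ = 1 ∧ ‖a‖ + ‖b‖ = ‖conj θ * a + θ * b‖ := by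
  by_cases ha : a = 0
  · refine ⟨1, by simp, by simp [ha]⟩
  by_cases hb : b = 0
  · refine ⟨1, by simp, by simp [hb]⟩
  have hA : (0:ℝ) < ‖a‖ := norm_pos_iff.mpr ha
  have hB : (0:ℝ) < ‖b‖ := norm_pos_iff.mpr hb
  have ha' : ((‖a‖ : ℝ) : ℂ) ≠ 0 := by
    simp only [ne_eq, Complex.ofReal_eq_zero]; exact hA.ne'
  have hb' : ((‖b‖ : ℝ) : ℂ) ≠ 0 := by
    simp only [ne_eq, Complex.ofReal_eq_zero]; exact hB.ne'
  set μ : ℂ := (a * conj b) / ((‖a‖ : ℂ) * (‖b‖ : ℂ)) with hμ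
  obtain ⟨θ, hθ⟩ := Complex.isAlgClosed.exists_pow_nat_eq μ (by norm_num : (0:ℕ) < 2)
  have hab : ‖((‖a‖ : ℂ) * (‖b‖ : ℂ))‖ = ‖a‖ * ‖b‖ := by
    rw [norm_mul, Complex.norm_real, Complex.norm_real, Real.norm_eq_abs, Real.norm_eq_abs,
      abs_of_nonneg (norm_nonneg a), abs_of_nonneg (norm_nonneg b)]
  have hμnorm : ‖μ‖ = 1 := by
    rw [hμ, norm_div, hab, norm_mul, RCLike.norm_conj, div_self (by positivity)]
  have hθnorm : ‖θ‖ = 1 := by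
    have h2 : ‖θ‖ ^ 2 = 1 := by rw [← norm_pow, hθ, hμnorm]
    nlinarith [norm_nonneg θ]
  refine ⟨θ, hθnorm, ?_⟩
  have hconj : conj θ * θ = 1 := by
    have h := RCLike.conj_mul θ
    rw [hθnorm] at h
    rw [h]; norm_num
  have key : conj θ * a + θ * b = conj θ * (a + θ ^ 2 * b) := by
    have h2 : conj θ * (θ ^ 2 * b) = θ * b := by
      calc conj θ * (θ ^ 2 * b) = (conj θ * θ) * (θ * b) := by ring
        _ = θ * b := by rw [hconj, one_mul]
    rw [mul_add, h2]
  have hbb : conj b * b = ((‖b‖ : ℂ)) ^ 2 := by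
    have := RCLike.conj_mul b
    exact_mod_cast this
  have hmb : μ * b = a * ((‖b‖ : ℂ) / (‖a‖ : ℂ)) := by
    rw [hμ, div_mul_eq_mul_div, mul_assoc, hbb, sq, mul_div_assoc]
    congr 1
    rw [mul_comm ((‖a‖:ℂ)) ((‖b‖:ℂ)), ← div_div, mul_div_assoc, div_self hb', mul_one]
  have hsum : a + μ * b = a * (((1 : ℝ) + ‖b‖ / ‖a‖ : ℝ) : ℂ) := by
    rw [hmb]; push_cast; ring
  rw [key, norm_mul, RCLike.norm_conj, hθnorm, one_mul, hθ, hsum, norm_mul,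
    Complex.norm_real, Real.norm_eq_abs, abs_of_nonneg (by positivity)]
  have hA' : ‖a‖ ≠ 0 := hA.ne'
  field_simp

lemma norm_le_two (S : EuclideanSpace ℂ (Fin N) →L[ℂ] EuclideanSpace ℂ (Fin N))
    (hS : ∀ x : EuclideanSpace ℂ (Fin N), ‖(⟪x, S x⟫ : ℂ)‖ ≤ ‖x‖ ^ 2) : ‖S‖ ≤ 2 := by
  have polar : ∀ x y : EuclideanSpace ℂ (Fin N),
      ‖(⟪x, S y⟫ : ℂ) + ⟪y, S x⟫‖ ≤ ‖x‖ ^ 2 + ‖y‖ ^ 2 := by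
    intro x y
    have hid : (2 : ℂ) * (⟪x, S y⟫ + ⟪y, S x⟫) = ⟪x + y, S (x + y)⟫ - ⟪x - y, S (x - y)⟫ := by
      simp [inner_add_left, inner_add_right, inner_sub_left, inner_sub_right, map_add, map_sub]
      ring
    have h2 : ‖(2:ℂ) * ((⟪x, S y⟫ : ℂ) + ⟪y, S x⟫)‖ ≤ ‖x + y‖^2 + ‖x - y‖^2 := by
      rw [hid]
      refine (norm_sub_le _ _).trans ?_
      gcongr <;> exact hS _
    rw [norm_mul, Complex.norm_ofNat] at h2
    have hpar := parallelogram_law_with_norm ℂ x y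
    nlinarith [h2, hpar]
  have bound2 : ∀ x y : EuclideanSpace ℂ (Fin N), ‖(⟪x, S y⟫ : ℂ)‖ ≤ ‖x‖ ^ 2 + ‖y‖ ^ 2 := by
    intro x y
    obtain ⟨θ, hθ, hkey⟩ := exists_phase (⟪x, S y⟫ : ℂ) (⟪y, S x⟫ : ℂ)
    have hp := polar (θ • x) y
    rw [inner_smul_left, map_smul, inner_smul_right, norm_smul, hθ, one_mul] at hp
    rw [← hkey] at hp
    exact le_trans (le_add_of_nonneg_right (norm_nonneg ((⟪y, S x⟫ : ℂ)))) hp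
  have bound3 : ∀ x y : EuclideanSpace ℂ (Fin N), ‖(⟪x, S y⟫ : ℂ)‖ ≤ 2 * ‖x‖ * ‖y‖ := by
    intro x y
    by_cases hx : x = 0
    · simp [hx]
    by_cases hy : y = 0
    · simp [hy]
    have hxn : (0:ℝ) < ‖x‖ := norm_pos_iff.mpr hx
    have hyn : (0:ℝ) < ‖y‖ := norm_pos_iff.mpr hy
    set t : ℝ := Real.sqrt (‖y‖ / ‖x‖) with ht
    have htpos : 0 < t := Real.sqrt_pos.mpr (by positivity)
    have ht2 : t ^ 2 = ‖y‖ / ‖x‖ := Real.sq_sqrt (by positivity)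
    have key := bound2 (((t:ℝ) : ℂ) • x) (((t⁻¹ : ℝ) : ℂ) • y)
    rw [inner_smul_left, map_smul, inner_smul_right, Complex.conj_ofReal] at key
    have hcan : ((t:ℝ) : ℂ) * (((t⁻¹ : ℝ) : ℂ) * ⟪x, S y⟫) = ⟪x, S y⟫ := by
      push_cast
      rw [← mul_assoc, mul_inv_cancel₀ (by exact_mod_cast htpos.ne'), one_mul]
    rw [hcan, norm_smul, norm_smul, Complex.norm_real, Complex.norm_real,
      Real.norm_eq_abs, Real.norm_eq_abs, abs_of_pos htpos, abs_of_pos (by positivity)] at key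
    refine key.trans (le_of_eq ?_)
    have hti : (t⁻¹) ^ 2 = ‖x‖ / ‖y‖ := by
      rw [inv_pow, ht2, inv_div]
    rw [mul_pow, mul_pow, ht2, hti]
    field_simp
    ring
  refine S.opNorm_le_bound (by norm_num) fun y => ?_
  have h := bound3 (S y) y
  have hre : ‖S y‖^2 ≤ ‖(⟪S y, S y⟫ : ℂ)‖ := by
    rw [← inner_self_eq_norm_sq (𝕜 := ℂ)]
    exact RCLike.re_le_norm _
  rcases eq_or_lt_of_le (norm_nonneg (S y)) with h0 | h0
  · rw [← h0]; positivity
  · nlinarith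

set_option maxHeartbeats 1000000 in
lemma main_re (T : EuclideanSpace ℂ (Fin N) →L[ℂ] EuclideanSpace ℂ (Fin N))
    (hT : ∀ x, ‖(⟪x, T x⟫ : ℂ)‖ ≤ ‖x‖ ^ 2) {n : ℕ} (hn : 1 ≤ n)
    {w : ℂ} (hw : ‖w‖ < 1) (v : EuclideanSpace ℂ (Fin N)) :
    0 ≤ Complex.re ⟪v, v - w • (T ^ n) v⟫ := by
  obtain ⟨z, hz⟩ := Complex.isAlgClosed.exists_pow_nat_eq w (by omega : 0 < n)
  have hzn : ‖z‖ < 1 := by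
    by_contra hc
    push_neg at hc
    have h1 : (1:ℝ) ≤ ‖z‖ ^ n := one_le_pow₀ hc
    rw [← norm_pow, hz] at h1
    linarith
  set ω : ℂ := Complex.exp (2 * Real.pi * Complex.I / n) with hωdef
  have hω : IsPrimitiveRoot ω n := Complex.isPrimitiveRoot_exp n (by omega)
  have hω1 : ‖ω‖ = 1 := by
    have h1 : ‖ω‖ ^ n = 1 := by rw [← norm_pow, hω.pow_eq_one, norm_one]
    rcases lt_trichotomy (‖ω‖) 1 with h | h | h
    · exfalso
      have := pow_lt_one₀ (norm_nonneg ω) h (Nat.one_le_iff_ne_zero.mp hn)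
      linarith
    · exact h
    · exfalso
      have := one_lt_pow₀ h (Nat.one_le_iff_ne_zero.mp hn)
      linarith
  have habsc : ∀ j : ℕ, ‖ω ^ j * z‖ < 1 := by
    intro j
    rw [norm_mul, norm_pow, hω1, one_pow, one_mul]
    exact hzn
  set B : ℕ → (EuclideanSpace ℂ (Fin N) →L[ℂ] EuclideanSpace ℂ (Fin N)) :=
    fun j => 1 - (ω ^ j * z) • T with hB
  have hBapp : ∀ j u, B j u = u - (ω ^ j * z) • T u := by
    intro j u
    simp [hB]
  -- the basic positivity
  have hRe : ∀ (c : ℂ), ‖c‖ ≤ 1 → ∀ u, 0 ≤ Complex.re (⟪u, u - c • T u⟫ : ℂ) := by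
    intro c hc u
    rw [inner_sub_right, inner_smul_right, Complex.sub_re]
    have h1 : Complex.re (⟪u, u⟫ : ℂ) = ‖u‖ ^ 2 := by
      have := inner_self_eq_norm_sq (𝕜 := ℂ) u
      simpa using this
    have h2 : |Complex.re (c * ⟪u, T u⟫)| ≤ ‖c * (⟪u, T u⟫ : ℂ)‖ := by
      exact Complex.abs_re_le_norm _
    have h3 : ‖c * (⟪u, T u⟫ : ℂ)‖ ≤ ‖u‖ ^ 2 := by
      rw [norm_mul]
      have := hT u
      nlinarith [norm_nonneg c, norm_nonneg (⟪u, T u⟫ : ℂ)]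
    rw [h1]
    have := abs_le.mp h2
    linarith
  -- injectivity of B j
  have hinj : ∀ j, Function.Injective (B j) := by
    intro j u1 u2 h12
    have h0 : B j (u1 - u2) = 0 := by rw [map_sub, h12, sub_self]
    rw [hBapp, sub_eq_zero] at h0
    set u := u1 - u2 with hu
    have hiu : (⟪u, u⟫ : ℂ) = (ω ^ j * z) * ⟪u, T u⟫ := by
      nth_rewrite 2 [h0]
      rw [inner_smul_right]
    have hnu : ‖u‖ ^ 2 ≤ ‖ω ^ j * z‖ * ‖u‖ ^ 2 := by
      have hl : ‖(⟪u, u⟫ : ℂ)‖ = ‖u‖ ^ 2 := by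
        rw [inner_self_eq_norm_sq_to_K]
        rw [norm_pow, RCLike.norm_ofReal, abs_of_nonneg (norm_nonneg u)]
      calc ‖u‖ ^ 2 = ‖(⟪u, u⟫ : ℂ)‖ := hl.symm
        _ = ‖ω ^ j * z‖ * ‖(⟪u, T u⟫ : ℂ)‖ := by rw [hiu, norm_mul]
        _ ≤ ‖ω ^ j * z‖ * ‖u‖ ^ 2 := by
            have := hT u
            have hnn : (0:ℝ) ≤ ‖ω ^ j * z‖ := norm_nonneg _
            nlinarith
    have hu0 : ‖u‖ = 0 := by
      by_contra hne
      have hpos : (0:ℝ) < ‖u‖ := lt_of_le_of_ne (norm_nonneg u) (Ne.symm hne)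
      have hj := habsc j
      have hmul := mul_lt_mul_of_pos_right hj (by positivity : (0:ℝ) < ‖u‖ ^ 2)
      rw [one_mul] at hmul
      linarith
    have : u = 0 := norm_eq_zero.mp hu0
    rw [hu] at this
    exact sub_eq_zero.mp this
  have hsurj : ∀ j, Function.Surjective (B j) := by
    intro j
    have h := (LinearMap.injective_iff_surjective
      (f := ((B j : EuclideanSpace ℂ (Fin N) →L[ℂ] EuclideanSpace ℂ (Fin N)) :
        EuclideanSpace ℂ (Fin N) →ₗ[ℂ] EuclideanSpace ℂ (Fin N)))).mp (by simpa using hinj j)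
    simpa using h
  -- right inverses
  set R : ℕ → EuclideanSpace ℂ (Fin N) → EuclideanSpace ℂ (Fin N) :=
    fun j y => (hsurj j y).choose with hR
  have hBR : ∀ j y, B j (R j y) = y := fun j y => (hsurj j y).choose_spec
  -- geometric sums
  set S : ℕ → (EuclideanSpace ℂ (Fin N) →L[ℂ] EuclideanSpace ℂ (Fin N)) :=
    fun j => ∑ i ∈ Finset.range n, ((ω ^ j * z) • T) ^ i with hS
  have hterm : ∀ j i : ℕ, ((ω ^ j * z) • T) ^ i = ((ω ^ i) ^ j) • ((z ^ i) • T ^ i) := by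
    intro j i
    rw [smul_pow (ω ^ j * z) T i, mul_pow, ← pow_mul, mul_comm j i, pow_mul,
      mul_smul ((ω ^ i) ^ j) (z ^ i) (T ^ i)]
  have hSsum : ∑ j ∈ Finset.range n, S j = (n : ℂ) • 1 := by
    calc ∑ j ∈ Finset.range n, S j
        = ∑ j ∈ Finset.range n, ∑ i ∈ Finset.range n, ((ω ^ i) ^ j) • ((z ^ i) • T ^ i) := by
          exact Finset.sum_congr rfl fun j _ => Finset.sum_congr rfl fun i _ => hterm j i
      _ = ∑ i ∈ Finset.range n, ∑ j ∈ Finset.range n, ((ω ^ i) ^ j) • ((z ^ i) • T ^ i) :=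
          Finset.sum_comm
      _ = ∑ i ∈ Finset.range n, (∑ j ∈ Finset.range n, (ω ^ i) ^ j) • ((z ^ i) • T ^ i) := by
          exact Finset.sum_congr rfl fun i _ =>
            (Finset.sum_smul (f := fun j => (ω ^ i) ^ j) (x := (z ^ i) • T ^ i)).symm
      _ = (n : ℂ) • 1 := by
          rw [Finset.sum_eq_single_of_mem 0 (Finset.mem_range.mpr (by omega))]
          · simp
          · intro i hi hi0
            have hωi : (ω ^ i) ≠ 1 :=
              hω.pow_ne_one_of_pos_of_lt (by omega) (Finset.mem_range.mp hi)
            rw [geom_sum_eq hωi, ← pow_mul, mul_comm i n, pow_mul, hω.pow_eq_one, one_pow,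
              sub_self, zero_div]
            exact zero_smul ℂ ((z ^ i) • T ^ i)
  set D : EuclideanSpace ℂ (Fin N) →L[ℂ] EuclideanSpace ℂ (Fin N) := 1 - w • (T ^ n) with hD
  have hSB : ∀ j, S j * B j = D := by
    intro j
    have hg := geom_sum_mul ((ω ^ j * z) • T) n
    have hBneg : B j = -((ω ^ j * z) • T - 1) := (neg_sub ((ω ^ j * z) • T) 1).symm ▸ rfl
    rw [hBneg, mul_neg (S j) ((ω ^ j * z) • T - 1), hg,
      neg_sub (((ω ^ j * z) • T) ^ n) 1, hD]
    congr 1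
    rw [smul_pow (ω ^ j * z) T n, mul_pow]
    have hωn : (ω ^ j) ^ n = 1 := by
      rw [← pow_mul, mul_comm j n, pow_mul, hω.pow_eq_one, one_pow]
    rw [hωn, one_mul, hz]
  have hDR : ∀ j y, S j y = D (R j y) := by
    intro j y
    have h := congrArg (fun f : EuclideanSpace ℂ (Fin N) →L[ℂ] EuclideanSpace ℂ (Fin N) =>
      f (R j y)) (hSB j)
    simp only [ContinuousLinearMap.mul_apply] at h
    rw [hBR] at h
    exact h
  have hsum_pt : ∀ y, D (∑ j ∈ Finset.range n, R j y) = (n : ℂ) • y := by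
    intro y
    rw [map_sum]
    calc ∑ j ∈ Finset.range n, D (R j y) = ∑ j ∈ Finset.range n, S j y := by
          exact Finset.sum_congr rfl fun j _ => (hDR j y).symm
      _ = (∑ j ∈ Finset.range n, S j) y := by rw [ContinuousLinearMap.sum_apply]
      _ = (n : ℂ) • y := by rw [hSsum]; simp
  have hn0 : (n : ℂ) ≠ 0 := Nat.cast_ne_zero.mpr (by omega)
  have hDsurj : Function.Surjective D := by
    intro y
    refine ⟨(n : ℂ)⁻¹ • ∑ j ∈ Finset.range n, R j y, ?_⟩
    rw [map_smul, hsum_pt, smul_smul ((n:ℂ)⁻¹) ((n:ℂ)) y, inv_mul_cancel₀ hn0, one_smul]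
  have hDinj : Function.Injective D := by
    have h := (LinearMap.injective_iff_surjective
      (f := ((D : EuclideanSpace ℂ (Fin N) →L[ℂ] EuclideanSpace ℂ (Fin N)) :
        EuclideanSpace ℂ (Fin N) →ₗ[ℂ] EuclideanSpace ℂ (Fin N)))).mpr (by simpa using hDsurj)
    simpa using h
  set y : EuclideanSpace ℂ (Fin N) := D v with hy
  have h1 : ∑ j ∈ Finset.range n, R j y = (n : ℂ) • v := by
    apply hDinj
    rw [hsum_pt, hy, ← map_smul]
  have h2 : 0 ≤ Complex.re (⟪y, ∑ j ∈ Finset.range n, R j y⟫ : ℂ) := by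
    rw [inner_sum, Complex.re_sum]
    apply Finset.sum_nonneg
    intro j _
    have hsymm : Complex.re (⟪y, R j y⟫ : ℂ) = Complex.re (⟪R j y, y⟫ : ℂ) := by
      rw [← inner_conj_symm (R j y) y]
      rw [Complex.conj_re]
    rw [hsymm]
    have := hRe (ω ^ j * z) (le_of_lt (habsc j)) (R j y)
    rw [← hBapp] at this
    rw [hBR] at this
    exact this
  rw [h1, inner_smul_right] at h2
  have h3 : 0 ≤ Complex.re (⟪y, v⟫ : ℂ) := by
    have hnre : Complex.re ((n : ℂ) * ⟪y, v⟫) = (n : ℝ) * Complex.re (⟪y, v⟫ : ℂ) := by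
      simp [Complex.mul_re]
    rw [hnre] at h2
    have hnpos : (0:ℝ) < n := by exact_mod_cast (by omega : 0 < n)
    nlinarith
  have h4 : Complex.re (⟪v, y⟫ : ℂ) = Complex.re (⟪y, v⟫ : ℂ) := by
    rw [← inner_conj_symm y v]
    rw [Complex.conj_re]
  have h5 : y = v - w • (T ^ n) v := by
    rw [hy, hD]
    simp
  rw [← h5, h4]
  exact h3

lemma power_bound (T : EuclideanSpace ℂ (Fin N) →L[ℂ] EuclideanSpace ℂ (Fin N))
    (hT : ∀ x, ‖(⟪x, T x⟫ : ℂ)‖ ≤ ‖x‖ ^ 2) {n : ℕ} (hn : 1 ≤ n)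
    (x : EuclideanSpace ℂ (Fin N)) : ‖(⟪x, (T ^ n) x⟫ : ℂ)‖ ≤ ‖x‖ ^ 2 := by
  set c : ℂ := ⟪x, (T ^ n) x⟫ with hc
  have hmain : ∀ w : ℂ, ‖w‖ < 1 → Complex.re (w * c) ≤ ‖x‖ ^ 2 := by
    intro w hw
    have h := main_re T hT hn hw x
    rw [inner_sub_right, inner_smul_right, Complex.sub_re] at h
    have h1 : Complex.re (⟪x, x⟫ : ℂ) = ‖x‖ ^ 2 := by
      have := inner_self_eq_norm_sq (𝕜 := ℂ) x
      simpa using this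
    rw [h1, ← hc] at h
    linarith
  by_contra hcon
  push_neg at hcon
  have hc0 : c ≠ 0 := by
    intro h0
    rw [h0, norm_zero] at hcon
    nlinarith [sq_nonneg ‖x‖]
  have hcpos : 0 < ‖c‖ := norm_pos_iff.mpr hc0
  set r : ℝ := (‖x‖ ^ 2 + ‖c‖) / (2 * ‖c‖ ^ 2) with hr
  have hrpos : 0 < r := by
    apply div_pos
    · nlinarith [sq_nonneg ‖x‖]
    · nlinarith
  set w : ℂ := (r : ℂ) * conj c with hw
  have hwc : w * c = ((r * ‖c‖ ^ 2 : ℝ) : ℂ) := by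
    rw [hw, mul_assoc, show conj c * c = ((‖c‖ : ℂ)) ^ 2 by exact_mod_cast RCLike.conj_mul c]
    push_cast
    ring
  have hre : Complex.re (w * c) = r * ‖c‖ ^ 2 := by rw [hwc, Complex.ofReal_re]
  have hrval : r * ‖c‖ ^ 2 = (‖x‖ ^ 2 + ‖c‖) / 2 := by
    rw [hr, div_mul_eq_mul_div, mul_comm 2 (‖c‖ ^ 2), ← div_div, mul_div_assoc,
      div_self (pow_ne_zero 2 hcpos.ne'), mul_one]
  have hnw : ‖w‖ < 1 := by
    rw [hw, norm_mul, Complex.norm_real, RCLike.norm_conj, Real.norm_eq_abs, abs_of_pos hrpos]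
    rw [hr, div_mul_eq_mul_div, div_lt_one (by nlinarith)]
    nlinarith
  have hfin := hmain w hnw
  rw [hre, hrval] at hfin
  linarith

theorem stmt_0 {N : ℕ} (A : Matrix (Fin N) (Fin N) ℂ) (h : numRad A ≤ 1) :
    ∀ n : ℕ, 1 ≤ n → opNorm (A ^ n) ≤ 2 := by
  intro n hn
  set T : EuclideanSpace ℂ (Fin N) →L[ℂ] EuclideanSpace ℂ (Fin N) :=
    Matrix.toEuclideanCLM (𝕜 := ℂ) A with hTdef
  have hbdd : BddAbove {r : ℝ | ∃ x : EuclideanSpace ℂ (Fin N), ‖x‖ = 1 ∧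
      r = ‖(inner (𝕜 := ℂ) x (Matrix.toEuclideanCLM (𝕜 := ℂ) A x))‖} := by
    refine ⟨‖T‖, ?_⟩
    rintro r ⟨x, hx, rfl⟩
    calc ‖(⟪x, T x⟫ : ℂ)‖ ≤ ‖x‖ * ‖T x‖ := norm_inner_le_norm x (T x)
      _ ≤ ‖x‖ * (‖T‖ * ‖x‖) := by
          gcongr
          exact T.le_opNorm x
      _ = ‖T‖ := by rw [hx]; ring
  have hT1 : ∀ x : EuclideanSpace ℂ (Fin N), ‖x‖ = 1 → ‖(⟪x, T x⟫ : ℂ)‖ ≤ 1 := by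
    intro x hx
    have hmem : ‖(⟪x, T x⟫ : ℂ)‖ ∈ {r : ℝ | ∃ x : EuclideanSpace ℂ (Fin N), ‖x‖ = 1 ∧
        r = ‖(inner (𝕜 := ℂ) x (Matrix.toEuclideanCLM (𝕜 := ℂ) A x))‖} := ⟨x, hx, rfl⟩
    have hle : ‖(⟪x, T x⟫ : ℂ)‖ ≤ numRad A := le_csSup hbdd hmem
    exact hle.trans h
  have hT : ∀ x : EuclideanSpace ℂ (Fin N), ‖(⟪x, T x⟫ : ℂ)‖ ≤ ‖x‖ ^ 2 := by
    intro x
    by_cases hx : x = 0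
    · simp [hx]
    have hxn : (0:ℝ) < ‖x‖ := norm_pos_iff.mpr hx
    set u : EuclideanSpace ℂ (Fin N) := ((‖x‖⁻¹ : ℝ) : ℂ) • x with hu
    have hun : ‖u‖ = 1 := by
      rw [hu, norm_smul, Complex.norm_real, Real.norm_eq_abs, abs_of_pos (by positivity),
        inv_mul_cancel₀ hxn.ne']
    have h1 := hT1 u hun
    rw [hu, inner_smul_left, map_smul, inner_smul_right, Complex.conj_ofReal] at h1
    rw [norm_mul, norm_mul, Complex.norm_real, Real.norm_eq_abs, abs_of_pos (by positivity)] at h1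
    -- h1 : ‖x‖⁻¹ * (‖x‖⁻¹ * ‖⟪x, T x⟫‖) ≤ 1
    have h2 : ‖(⟪x, T x⟫ : ℂ)‖ = ‖x‖ ^ 2 * (‖x‖⁻¹ * (‖x‖⁻¹ * ‖(⟪x, T x⟫ : ℂ)‖)) := by
      field_simp
    rw [h2]
    nlinarith [norm_nonneg (⟪x, T x⟫ : ℂ), sq_nonneg ‖x‖]
  have hfin : ‖T ^ n‖ ≤ 2 := norm_le_two (T ^ n) (power_bound T hT hn)
  show ‖Matrix.toEuclideanCLM (𝕜 := ℂ) (A ^ n)‖ ≤ 2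
  rw [map_pow]
  exact hfin
end

section
/- Forward Euler stability via numerical range: if A is an N×N complex matrix whose numerical range W(A) is contained in the closed disc {z : |1 + z| ≤ 1}, then r(I + A) ≤ 1 and consequently ‖(I + A)ⁿ‖ ≤ 2 for all n ≥ 1. -/
set_option maxHeartbeats 1000000 in
open Polynomial in
lemma poly_prod {n : ℕ} (hn : 0 < n) {ω : ℂ} (hω : IsPrimitiveRoot ω n) (z : ℂ) :
    ∏ k ∈ Finset.range n, (1 - C (ω ^ k * z) * X) = 1 - C (z ^ n) * X ^ n := by
  apply Polynomial.funext
  intro t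
  have h := congrArg (Polynomial.eval 1) (X_pow_sub_C_eq_prod hω hn (rfl : (z*t) ^ n = (z*t)^n))
  simp only [eval_sub, eval_pow, eval_X, eval_C, eval_prod, one_pow, eval_mul, eval_one,
    eval_prod] at h ⊢
  calc ∏ k ∈ Finset.range n, (1 - ω ^ k * z * t) = ∏ k ∈ Finset.range n, (1 - ω ^ k * (z * t)) := by
        congr 1; ext k; ring
    _ = 1 - (z*t)^n := h.symm
    _ = 1 - z ^ n * t ^ n := by ring

open Polynomial Finset in
lemma poly_sum {n : ℕ} (hn : 0 < n) {ω : ℂ} (hω : IsPrimitiveRoot ω n) (z : ℂ)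
    (hprod : ∏ k ∈ Finset.range n, (1 - C (ω ^ k * z) * X) = 1 - C (z ^ n) * X ^ n) :
    ∑ k ∈ Finset.range n, ∏ j ∈ (Finset.range n).erase k, (1 - C (ω ^ j * z) * X)
      = C (n : ℂ) := by
  set f : ℕ → ℂ[X] := fun k => 1 - C (ω ^ k * z) * X with hf
  have hderf : ∀ k, derivative (f k) = - C (ω ^ k * z) := by
    intro k
    rw [hf]
    rw [derivative_sub, derivative_one, derivative_C_mul, derivative_X, mul_one, zero_sub]
  have hder : derivative (∏ k ∈ range n, f k)
      = ∑ k ∈ range n, (∏ j ∈ (range n).erase k, f j) * derivative (f k) := by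
    rw [Finset.prod_eq_multiset_prod, derivative_prod, Finset.sum_eq_multiset_sum]
    congr 1
  have hder2 : derivative (∏ k ∈ range n, f k) = -(C (z^n) * (C (n:ℂ) * X ^ (n-1))) := by
    rw [hprod, derivative_sub, derivative_one, derivative_C_mul, derivative_X_pow, zero_sub]
  have key : ∑ k ∈ range n, (∏ j ∈ (range n).erase k, f j) * derivative (f k)
      = - (C (z^n) * (C (n:ℂ) * X ^ (n-1))) := by rw [← hder, hder2]
  have expand : ∀ k ∈ range n, ∏ j ∈ (range n).erase k, f j
      = (∏ j ∈ range n, f j) - ((∏ j ∈ (range n).erase k, f j) * derivative (f k)) * X := by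
    intro k hk
    have h1 : (∏ j ∈ (range n).erase k, f j) * f k = ∏ j ∈ range n, f j :=
      Finset.prod_erase_mul _ _ hk
    rw [hderf k, ← h1, hf]
    ring
  rw [Finset.sum_congr rfl expand, Finset.sum_sub_distrib, ← Finset.sum_mul, key,
    Finset.sum_const, Finset.card_range, hprod, nsmul_eq_mul]
  have hX : (X : ℂ[X]) ^ (n-1) * X = X ^ n := by
    conv_rhs => rw [show n = (n-1) + 1 from (Nat.succ_pred_eq_of_pos hn).symm]
    rw [pow_succ]
  have hC : ((n : ℂ[X])) = C (n:ℂ) := by simp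
  rw [hC, ← hX]
  ring


variable {E : Type*} [NormedAddCommGroup E] [InnerProductSpace ℂ E] [FiniteDimensional ℂ E]

local notation "⟪" x ", " y "⟫" => @inner ℂ _ _ x y

lemma abs_inner_flip (T : E →L[ℂ] E) (u : E) :
    ‖⟪T u, u⟫‖ = ‖⟪u, T u⟫‖ := by
  rw [← inner_conj_symm u (T u), Complex.norm_conj]

lemma norm_le_two_of_quad (T : E →L[ℂ] E) (M : ℝ) (hM : 0 ≤ M)
    (h : ∀ x : E, ‖⟪x, T x⟫‖ ≤ M * ‖x‖ ^ 2) : ‖T‖ ≤ 2 * M := by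
  have habs : ∀ u : E, ‖⟪T u, u⟫‖ ≤ M * ‖u‖ ^ 2 := by
    intro u; rw [abs_inner_flip]; exact h u
  have est : ∀ x y : E, ‖⟪T y, x⟫‖ ≤ M * (‖x‖ ^ 2 + ‖y‖ ^ 2) := by
    intro x y
    have hp := inner_map_polarization (T : E →ₗ[ℂ] E) x y
    simp only [ContinuousLinearMap.coe_coe] at hp
    rw [hp]
    have hpar := parallelogram_law_with_norm ℂ x y
    have hparI := parallelogram_law_with_norm ℂ x (Complex.I • y)
    have hIy : ‖Complex.I • y‖ = ‖y‖ := by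
      rw [norm_smul]; simp
    rw [hIy] at hparI
    calc ‖(⟪T (x + y), x + y⟫ - ⟪T (x - y), x - y⟫ +
            Complex.I * ⟪T (x + Complex.I • y), x + Complex.I • y⟫ -
          Complex.I * ⟪T (x - Complex.I • y), x - Complex.I • y⟫) / 4‖
        ≤ (‖⟪T (x + y), x + y⟫‖ + ‖⟪T (x - y), x - y⟫‖ +
            ‖⟪T (x + Complex.I • y), x + Complex.I • y⟫‖ +
            ‖⟪T (x - Complex.I • y), x - Complex.I • y⟫‖) / 4 := by
          rw [norm_div]
          simp only [Complex.norm_ofNat]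
          gcongr ?_ / 4
          calc _ ≤ ‖⟪T (x + y), x + y⟫ - ⟪T (x - y), x - y⟫ +
                Complex.I * ⟪T (x + Complex.I • y), x + Complex.I • y⟫‖ +
                ‖Complex.I * ⟪T (x - Complex.I • y), x - Complex.I • y⟫‖ :=
              norm_sub_le _ _
            _ ≤ (‖⟪T (x + y), x + y⟫ - ⟪T (x - y), x - y⟫‖ +
                ‖Complex.I * ⟪T (x + Complex.I • y), x + Complex.I • y⟫‖) +
                ‖Complex.I * ⟪T (x - Complex.I • y), x - Complex.I • y⟫‖ := by
              gcongr; exact norm_add_le _ _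
            _ ≤ _ := by
              simp only [norm_mul, Complex.norm_I, one_mul]
              gcongr
              exact norm_sub_le _ _
      _ ≤ (M * ‖x + y‖ ^ 2 + M * ‖x - y‖ ^ 2 + M * ‖x + Complex.I • y‖ ^ 2 +
            M * ‖x - Complex.I • y‖ ^ 2) / 4 := by
          gcongr <;> exact habs _
      _ = M * ((‖x + y‖ ^ 2 + ‖x - y‖ ^ 2) + (‖x + Complex.I • y‖ ^ 2 +
            ‖x - Complex.I • y‖ ^ 2)) / 4 := by ring
      _ = M * (‖x‖ ^ 2 + ‖y‖ ^ 2) := by nlinarith [hpar, hparI]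
  have hunit : ∀ u : E, ‖u‖ = 1 → ‖T u‖ ≤ 2 * M := by
    intro u hu
    rcases eq_or_ne (T u) 0 with hTu | hTu
    · rw [hTu]; simp; positivity
    have hTun : (0:ℝ) < ‖T u‖ := norm_pos_iff.mpr hTu
    have h2 := est (((‖T u‖ : ℂ))⁻¹ • T u) u
    rw [inner_smul_right, inner_self_eq_norm_sq_to_K] at h2
    have hn : ‖((‖T u‖ : ℂ))⁻¹ • T u‖ = 1 := by
      rw [norm_smul, norm_inv, Complex.norm_real, Real.norm_eq_abs, abs_of_pos hTun]
      field_simp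
    rw [hn, hu] at h2
    have : ‖(((‖T u‖:ℝ) : ℂ))⁻¹ * ((‖T u‖:ℝ) : ℂ) ^ 2‖ = ‖T u‖ := by
      rw [norm_mul, norm_inv, norm_pow]
      simp only [Complex.norm_real, Real.norm_eq_abs, abs_of_pos hTun]
      field_simp
    calc ‖T u‖ = ‖(((‖T u‖:ℝ) : ℂ))⁻¹ * ((‖T u‖:ℝ) : ℂ) ^ 2‖ := this.symm
      _ ≤ M * (1 ^ 2 + 1 ^ 2) := h2
      _ = 2 * M := by ring
  refine T.opNorm_le_bound (by positivity) fun y => ?_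
  rcases eq_or_ne y 0 with rfl | hy
  · simp
  have hyn : (0:ℝ) < ‖y‖ := norm_pos_iff.mpr hy
  have hu : ‖((‖y‖ : ℂ))⁻¹ • y‖ = 1 := by
    rw [norm_smul, norm_inv, Complex.norm_real, Real.norm_eq_abs, abs_of_pos hyn]
    field_simp
  have := hunit _ hu
  rw [map_smul, norm_smul, norm_inv, Complex.norm_real, Real.norm_eq_abs, abs_of_pos hyn] at this
  calc ‖T y‖ = ‖y‖ * (‖y‖⁻¹ * ‖T y‖) := by field_simp
    _ ≤ ‖y‖ * (2 * M) := by gcongr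
    _ = 2 * M * ‖y‖ := by ring


lemma re_inner_self (y : E) : (⟪y, y⟫).re = ‖y‖ ^ 2 := by
  have := inner_self_eq_norm_sq (𝕜 := ℂ) y
  simpa using this

lemma inv_exists (S : E →L[ℂ] E) (hbij : Function.Bijective S) :
    ∃ T : E →L[ℂ] E, (∀ v, S (T v) = v) ∧ (∀ v, T (S v) = v) := by
  let e := LinearEquiv.ofBijective (S : E →ₗ[ℂ] E) (by simpa using hbij)
  refine ⟨LinearMap.toContinuousLinearMap (e.symm : E →ₗ[ℂ] E), fun v => ?_, fun v => ?_⟩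
  · have h1 : LinearMap.toContinuousLinearMap (e.symm : E →ₗ[ℂ] E) v = e.symm v := rfl
    rw [h1]
    exact e.apply_symm_apply v
  · have h1 : LinearMap.toContinuousLinearMap (e.symm : E →ₗ[ℂ] E) (S v) = e.symm (S v) := rfl
    rw [h1]
    exact e.symm_apply_apply v

lemma S_re_lower (B : E →L[ℂ] E) (hB : ∀ x : E, ‖⟪x, B x⟫‖ ≤ ‖x‖ ^ 2)
    (u : ℂ) (y : E) : (1 - ‖u‖) * ‖y‖ ^ 2 ≤ (⟪y, (1 - u • B : E →L[ℂ] E) y⟫).re := by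
  have hexp : ⟪y, (1 - u • B : E →L[ℂ] E) y⟫ = ⟪y, y⟫ - u * ⟪y, B y⟫ := by
    simp only [ContinuousLinearMap.sub_apply, ContinuousLinearMap.one_apply,
      ContinuousLinearMap.smul_apply, inner_sub_right, inner_smul_right]
  rw [hexp]
  have h1 : (u * ⟪y, B y⟫).re ≤ ‖u‖ * ‖y‖ ^ 2 := by
    calc (u * ⟪y, B y⟫).re ≤ ‖u * ⟪y, B y⟫‖ := Complex.re_le_norm _
      _ = ‖u‖ * ‖⟪y, B y⟫‖ := norm_mul _ _
      _ ≤ ‖u‖ * ‖y‖ ^ 2 := by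
          have := norm_nonneg u
          gcongr
          exact hB y
  rw [Complex.sub_re, re_inner_self]
  nlinarith [norm_nonneg u, sq_nonneg ‖y‖]

lemma S_bij (B : E →L[ℂ] E) (hB : ∀ x : E, ‖⟪x, B x⟫‖ ≤ ‖x‖ ^ 2)
    (u : ℂ) (hu : ‖u‖ < 1) :
    Function.Bijective ((1 - u • B : E →L[ℂ] E) : E → E) := by
  have hinj : Function.Injective ((1 - u • B : E →L[ℂ] E) : E → E) := by
    intro a b hab
    have h0 : (1 - u • B : E →L[ℂ] E) (a - b) = 0 := by rw [map_sub, hab, sub_self]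
    have := S_re_lower B hB u (a - b)
    rw [h0] at this
    simp only [inner_zero_right, Complex.zero_re] at this
    have hpos : 0 < 1 - ‖u‖ := by linarith
    have hsq : ‖a - b‖ ^ 2 ≤ 0 := by nlinarith [sq_nonneg ‖a - b‖]
    have h3 : ‖a - b‖ ^ 2 = 0 := le_antisymm hsq (sq_nonneg _)
    have h4 : ‖a - b‖ = 0 := by
      have := pow_eq_zero_iff (M₀ := ℝ) (a := ‖a - b‖) (n := 2) (by norm_num)
      exact this.mp h3
    rw [← sub_eq_zero]
    exact norm_eq_zero.mp h4
  have hinj' : Function.Injective ((1 - u • B : E →L[ℂ] E) : E →ₗ[ℂ] E) := by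
    exact hinj
  exact ⟨hinj, (LinearMap.injective_iff_surjective).mp hinj'⟩


open Polynomial Finset in
lemma berger (B : E →L[ℂ] E) (hB : ∀ x : E, ‖⟪x, B x⟫‖ ≤ ‖x‖ ^ 2)
    {n : ℕ} (hn : 0 < n) (x : E) : ‖⟪x, (B ^ n) x⟫‖ ≤ ‖x‖ ^ 2 := by
  have main : ∀ w : ℂ, ‖w‖ < 1 → (w * ⟪x, (B ^ n) x⟫).re ≤ ‖x‖ ^ 2 := by
    intro w hw
    obtain ⟨z, hz⟩ := IsAlgClosed.exists_pow_nat_eq w hn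
    have hzabs : ‖z‖ < 1 := by
      by_contra hc
      push_neg at hc
      have h1 : (1:ℝ) ≤ ‖z‖ ^ n := one_le_pow₀ hc
      rw [← hz, norm_pow] at hw
      linarith
    set ω : ℂ := Complex.exp (2 * Real.pi * Complex.I / n) with hωdef
    have hω : IsPrimitiveRoot ω n := Complex.isPrimitiveRoot_exp n hn.ne'
    have hωabs : ‖ω‖ = 1 := by
      have h1 : ‖ω‖ ^ n = 1 := by
        rw [← norm_pow, hω.pow_eq_one, norm_one]
      rcases lt_trichotomy (‖ω‖) 1 with hlt | heq | hgt
      · exfalso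
        have := pow_lt_one₀ (norm_nonneg ω) hlt hn.ne'
        rw [h1] at this; exact lt_irrefl _ this
      · exact heq
      · exfalso
        have := one_lt_pow₀ hgt hn.ne'
        rw [h1] at this; exact lt_irrefl _ this
    have hu : ∀ k : ℕ, ‖ω ^ k * z‖ < 1 := by
      intro k
      rw [norm_mul, norm_pow, hωabs, one_pow, one_mul]
      exact hzabs
    choose T hT1 hT2 using fun k : ℕ => inv_exists (1 - (ω ^ k * z) • B) (S_bij B hB _ (hu k))
    set Q : ℕ → (E →L[ℂ] E) :=
      fun k => aeval B (∏ j ∈ (range n).erase k, (1 - C (ω ^ j * z) * X)) with hQ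
    set CC : E →L[ℂ] E := 1 - (z ^ n) • (B ^ n) with hCC
    have haeval_lin : ∀ a : ℂ, aeval B (1 - C a * X) = 1 - a • B := by
      intro a
      simp only [map_sub, map_one, map_mul, aeval_C, aeval_X]
      rw [← Algebra.smul_def]
    have haeval_CC : aeval B (1 - C (z ^ n) * X ^ n) = CC := by
      simp only [map_sub, map_one, map_mul, aeval_C, aeval_X_pow]
      rw [← Algebra.smul_def, hCC]
    have hfact1 : ∀ k ∈ range n, (1 - (ω ^ k * z) • B) * Q k = CC := by
      intro k hk
      rw [hQ, ← haeval_lin (ω ^ k * z), ← map_mul,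
        Finset.mul_prod_erase (range n) (fun j => 1 - C (ω ^ j * z) * X) hk,
        poly_prod hn hω z, haeval_CC]
    have hfact2 : ∀ k ∈ range n, Q k * (1 - (ω ^ k * z) • B) = CC := by
      intro k hk
      rw [hQ, ← haeval_lin (ω ^ k * z), ← map_mul,
        Finset.prod_erase_mul (range n) (fun j => 1 - C (ω ^ j * z) * X) hk,
        poly_prod hn hω z, haeval_CC]
    have hQsum : ∑ k ∈ range n, Q k = (n : ℂ) • 1 := by
      rw [hQ, ← map_sum, poly_sum hn hω z (poly_prod hn hω z), aeval_C,
        Algebra.algebraMap_eq_smul_one]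
    set D : E →L[ℂ] E := ∑ k ∈ range n, T k with hD
    have hDCC : ∀ v, D (CC v) = (n : ℂ) • v := by
      intro v
      rw [hD, ContinuousLinearMap.sum_apply]
      have hterm : ∀ k ∈ range n, T k (CC v) = Q k v := by
        intro k hk
        rw [← hfact1 k hk, ContinuousLinearMap.mul_apply, hT2]
      rw [Finset.sum_congr rfl hterm, ← ContinuousLinearMap.sum_apply, hQsum]
      simp
    have hCCD : ∀ v, CC (D v) = (n : ℂ) • v := by
      intro v
      rw [hD, ContinuousLinearMap.sum_apply, map_sum]
      have hterm : ∀ k ∈ range n, CC (T k v) = Q k v := by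
        intro k hk
        rw [← hfact2 k hk, ContinuousLinearMap.mul_apply, hT1]
      rw [Finset.sum_congr rfl hterm, ← ContinuousLinearMap.sum_apply, hQsum]
      simp
    have hreT : ∀ k v, 0 ≤ (⟪v, T k v⟫).re := by
      intro k v
      have h1 : (1 - (ω ^ k * z) • B) (T k v) = v := hT1 k v
      have h2 := S_re_lower B hB (ω ^ k * z) (T k v)
      rw [h1] at h2
      have h3 : (⟪v, T k v⟫).re = (⟪T k v, v⟫).re := by
        rw [← inner_conj_symm v (T k v), Complex.conj_re]
      rw [h3]
      nlinarith [hu k, sq_nonneg ‖T k v‖, norm_nonneg (ω ^ k * z)]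
    have hreD : ∀ v, 0 ≤ (⟪v, D v⟫).re := by
      intro v
      rw [hD, ContinuousLinearMap.sum_apply, inner_sum, Complex.re_sum]
      exact Finset.sum_nonneg fun k _ => hreT k v
    have hn0 : (n : ℂ) ≠ 0 := Nat.cast_ne_zero.mpr hn.ne'
    set y : E := (n : ℂ)⁻¹ • CC x with hy
    have hxy : D y = x := by
      rw [hy, map_smul, hDCC, smul_smul, inv_mul_cancel₀ hn0, one_smul]
    have hre_xCC : 0 ≤ (⟪x, CC x⟫).re := by
      rw [← hxy, hCCD y, inner_smul_right, Complex.mul_re]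
      have hsym : (⟪D y, y⟫).re = (⟪y, D y⟫).re := by
        rw [← inner_conj_symm (D y) y, Complex.conj_re]
      simp only [Complex.natCast_re, Complex.natCast_im, zero_mul, sub_zero]
      rw [hsym]
      exact mul_nonneg (Nat.cast_nonneg n) (hreD y)
    have hexp : ⟪x, CC x⟫ = ⟪x, x⟫ - z ^ n * ⟪x, (B ^ n) x⟫ := by
      rw [hCC]
      simp only [ContinuousLinearMap.sub_apply, ContinuousLinearMap.one_apply,
        ContinuousLinearMap.smul_apply, inner_sub_right, inner_smul_right]
    rw [hexp, Complex.sub_re, re_inner_self, hz] at hre_xCC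
    linarith
  rcases eq_or_ne (⟪x, (B ^ n) x⟫) 0 with hc | hc
  · rw [hc]
    simpa using sq_nonneg ‖x‖
  set c : ℂ := ⟪x, (B ^ n) x⟫ with hcdef
  by_contra hlt
  push_neg at hlt
  have hcabs : 0 < ‖c‖ := norm_pos_iff.mpr hc
  set t : ℝ := (‖x‖ ^ 2 + ‖c‖) / 2 with ht
  have ht1 : ‖x‖ ^ 2 < t := by rw [ht]; linarith
  have ht2 : t < ‖c‖ := by rw [ht]; linarith
  have ht0 : 0 < t := lt_of_le_of_lt (sq_nonneg _) ht1
  set w : ℂ := (t : ℂ) * (starRingEnd ℂ) c / ((‖c‖ : ℝ) : ℂ) ^ 2 with hw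
  have hccne : (((‖c‖ : ℝ)) : ℂ) ≠ 0 := by
    exact_mod_cast ne_of_gt hcabs
  have hkey : (starRingEnd ℂ) c * c = (((‖c‖ : ℝ)) : ℂ) ^ 2 := by
    rw [mul_comm, Complex.mul_conj]
    norm_cast
    rw [← Complex.sq_norm]
  have hwc : w * c = (t : ℂ) := by
    rw [hw, div_mul_eq_mul_div, mul_assoc, hkey, mul_div_assoc,
      div_self (pow_ne_zero 2 hccne), mul_one]
  have hwabs : ‖w‖ < 1 := by
    have habsw : ‖w‖ = t / ‖c‖ := by
      rw [hw, norm_div, norm_mul]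
      simp only [Complex.norm_real, Real.norm_eq_abs, Complex.norm_conj, norm_pow]
      rw [abs_of_pos ht0, abs_of_pos hcabs]
      field_simp
    rw [habsw, div_lt_one hcabs]
    exact ht2
  have := main w hwabs
  rw [hwc] at this
  simp only [Complex.ofReal_re] at this
  linarith


lemma quad_of_unit (B : E →L[ℂ] E) (h : ∀ x : E, ‖x‖ = 1 → ‖⟪x, B x⟫‖ ≤ 1) :
    ∀ x : E, ‖⟪x, B x⟫‖ ≤ ‖x‖ ^ 2 := by
  intro x
  rcases eq_or_ne x 0 with rfl | hx
  · simp
  have hxn : (0:ℝ) < ‖x‖ := norm_pos_iff.mpr hx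
  have hu : ‖((‖x‖ : ℂ))⁻¹ • x‖ = 1 := by
    rw [norm_smul, norm_inv, Complex.norm_real, Real.norm_eq_abs, abs_of_pos hxn]
    field_simp
  have h1 := h _ hu
  have hinner : ‖⟪((‖x‖ : ℂ))⁻¹ • x, B (((‖x‖ : ℂ))⁻¹ • x)⟫‖
      = ‖x‖⁻¹ * ‖x‖⁻¹ * ‖⟪x, B x⟫‖ := by
    rw [map_smul, inner_smul_left, inner_smul_right, norm_mul, norm_mul]
    simp only [norm_inv, Complex.norm_conj, Complex.norm_real, Real.norm_eq_abs, abs_of_pos hxn]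
    ring
  rw [hinner] at h1
  have h2 : ‖⟪x, B x⟫‖ = ‖x‖ ^ 2 * (‖x‖⁻¹ * ‖x‖⁻¹ * ‖⟪x, B x⟫‖) := by
    field_simp
  rw [h2]
  nlinarith [sq_nonneg ‖x‖]

theorem stmt_9 {N : ℕ} (A : Matrix (Fin N) (Fin N) ℂ)
    (h : numRange A ⊆ Metric.closedBall (-1 : ℂ) 1) :
    numRad (1 + A) ≤ 1 ∧ ∀ n : ℕ, 1 ≤ n → opNorm ((1 + A) ^ n) ≤ 2 := by
  set B := Matrix.toEuclideanCLM (𝕜 := ℂ) (1 + A) with hBdef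
  have hunit : ∀ x : EuclideanSpace ℂ (Fin N), ‖x‖ = 1 →
      ‖inner (𝕜 := ℂ) x (B x)‖ ≤ 1 := by
    intro x hx
    have hsplit : B x = x + Matrix.toEuclideanCLM (𝕜 := ℂ) A x := by
      rw [hBdef, map_add, map_one]
      rfl
    have hin : inner (𝕜 := ℂ) x (B x)
        = 1 + inner (𝕜 := ℂ) x (Matrix.toEuclideanCLM (𝕜 := ℂ) A x) := by
      rw [hsplit, inner_add_right, inner_self_eq_norm_sq_to_K, hx]
      norm_num
    have hmem : inner (𝕜 := ℂ) x (Matrix.toEuclideanCLM (𝕜 := ℂ) A x) ∈ numRange A :=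
      ⟨x, hx, rfl⟩
    have hball := h hmem
    rw [Metric.mem_closedBall, Complex.dist_eq] at hball
    rw [hin]
    calc ‖1 + inner (𝕜 := ℂ) x (Matrix.toEuclideanCLM (𝕜 := ℂ) A x)‖
        = ‖inner (𝕜 := ℂ) x (Matrix.toEuclideanCLM (𝕜 := ℂ) A x) - (-1)‖ := by
          congr 1; ring
      _ ≤ 1 := hball
  constructor
  · apply Real.sSup_le
    · rintro r ⟨x, hx, rfl⟩
      exact hunit x hx
    · exact zero_le_one
  · intro n hn
    have hq := quad_of_unit B hunit
    have hb := berger B hq (n := n) hn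
    have hnorm := norm_le_two_of_quad (B ^ n) 1 zero_le_one (fun x => by
      simpa using hb x)
    have hBn : Matrix.toEuclideanCLM (𝕜 := ℂ) ((1 + A) ^ n) = B ^ n := by
      rw [hBdef, map_pow]
    unfold opNorm
    rw [hBn]
    linarith
end

section
/- SSP decomposition stability for RK3: if A ∈ M_N(ℂ) satisfies r(I + A) ≤ 1, then P₃(A) := I + A + A²/2 + A³/6 satisfies r(P₃(A)) ≤ 1, using the identity P₃(A) = (1/3)I + (1/2)(I + A) + (1/6)(I + A)³. -/
namespace SSPaux13
open Complex
open Complex Filter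
noncomputable def om : ℂ := ⟨-1/2, Real.sqrt 3 / 2⟩

lemma h3 : (Real.sqrt 3) * Real.sqrt 3 = 3 := Real.mul_self_sqrt (by norm_num)

lemma om_sum : 1 + om + om^2 = 0 := by
  simp only [om, Complex.ext_iff, pow_two, Complex.add_re, Complex.add_im, Complex.mul_re,
    Complex.mul_im, Complex.one_re, Complex.one_im, Complex.zero_re, Complex.zero_im]
  constructor
  · linear_combination (-(1/4 : ℝ)) * h3
  · ring

lemma om_cube : om^3 = 1 := by linear_combination (om - 1) * om_sum

lemma om_abs : ‖om‖ = 1 := by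
  have h : ‖om‖ ^ 2 = 1 := by
    rw [Complex.sq_norm]
    simp only [Complex.normSq_apply, om]
    linear_combination (1/4 : ℝ) * h3
  nlinarith [norm_nonneg om, sq_nonneg (‖om‖ - 1)]

lemma scalar_bound (c : ℂ) (h : ∀ z : ℂ, ‖z‖ < 1 → (z^3 * c).re ≤ 1) :
    ‖c‖ ≤ 1 := by
  rcases eq_or_ne c 0 with rfl | hc
  · simp
  set a := c.arg with ha
  set u : ℂ := Complex.exp (-((a:ℂ)/3) * Complex.I) with hu
  have hu3 : u^3 * c = (‖c‖ : ℂ) := by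
    rw [hu, ← Complex.exp_nat_mul]
    have h1 : ((3:ℕ):ℂ) * (-((a:ℂ)/3) * Complex.I) = -((a:ℂ) * Complex.I) := by
      push_cast; ring
    rw [h1]
    conv_lhs => rw [← Complex.norm_mul_exp_arg_mul_I c]
    rw [← ha, mul_comm (‖c‖ : ℂ), ← mul_assoc, ← Complex.exp_add]
    simp
  have key : ∀ r : ℝ, 0 < r → r < 1 → r^3 * ‖c‖ ≤ 1 := by
    intro r hr0 hr1
    have habs : ‖((r:ℂ) * u)‖ < 1 := by
      rw [norm_mul]
      have : ‖u‖ = 1 := by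
        rw [hu, Complex.norm_exp]
        simp
      rw [this, mul_one, Complex.norm_real, Real.norm_eq_abs, abs_of_pos hr0]
      exact hr1
    have := h ((r:ℂ) * u) habs
    have heq : (((r:ℂ) * u)^3 * c) = ((r^3 * ‖c‖ : ℝ) : ℂ) := by
      rw [mul_pow, mul_assoc, hu3]; push_cast; ring
    rw [heq, Complex.ofReal_re] at this
    exact this
  have ht : Tendsto (fun r : ℝ => r^3 * ‖c‖) (nhdsWithin 1 (Set.Iio 1))
      (nhds (‖c‖)) := by
    have : Continuous (fun r : ℝ => r^3 * ‖c‖) := by continuity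
    have h2 := (this.tendsto 1).mono_left (nhdsWithin_le_nhds (s := Set.Iio 1))
    simpa using h2
  refine le_of_tendsto ht ?_
  have hpos : ∀ᶠ r in nhdsWithin (1:ℝ) (Set.Iio 1), 0 < r :=
    ((eventually_gt_nhds (by norm_num : (0:ℝ) < 1)).filter_mono nhdsWithin_le_nhds)
  have hlt : ∀ᶠ r in nhdsWithin (1:ℝ) (Set.Iio 1), r < 1 :=
    eventually_mem_nhdsWithin.mono (fun r hr => hr)
  filter_upwards [hpos, hlt] with r h1 h2 using key r h1 h2
variable {N : ℕ}
local notation "E" => EuclideanSpace ℂ (Fin N)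

-- Lemma D
lemma lemD (S S' : E →L[ℂ] E) (hS : ∀ x : E, 0 ≤ (inner (𝕜 := ℂ) x (S x)).re)
    (hSS' : ∀ y, S (S' y) = y) : ∀ y : E, 0 ≤ (inner (𝕜 := ℂ) y (S' y)).re := by
  intro y
  set x := S' y with hx
  have hy : y = S x := (hSS' y).symm
  rw [hy, ← inner_conj_symm (S x) x, Complex.conj_re]
  exact hS x

-- right/left inverse existence
lemma exists_inv (S : E →L[ℂ] E) (ε : ℝ) (hε : 0 < ε)
    (hS : ∀ x : E, ε * ‖x‖^2 ≤ (inner (𝕜 := ℂ) x (S x)).re) :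
    ∃ S' : E →L[ℂ] E, (∀ y, S (S' y) = y) ∧ (∀ x, S' (S x) = x) := by
  have hinj : Function.Injective S := by
    rw [injective_iff_map_eq_zero]
    intro x hx
    have h1 := hS x
    rw [hx] at h1
    simp only [inner_zero_right, Complex.zero_re] at h1
    have : ‖x‖^2 ≤ 0 := by nlinarith
    have := sq_nonneg ‖x‖
    have hn : ‖x‖ = 0 := by nlinarith
    exact norm_eq_zero.mp hn
  have hsurj : Function.Surjective S.toLinearMap := LinearMap.injective_iff_surjective.mp hinj
  let e := LinearEquiv.ofBijective S.toLinearMap ⟨hinj, hsurj⟩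
  refine ⟨e.symm.toContinuousLinearEquiv.toContinuousLinearMap, fun y => ?_, fun x => ?_⟩
  · exact e.apply_symm_apply y
  · exact e.symm_apply_apply x

lemma expand2 (T : E →L[ℂ] E) (a b : ℂ) :
    (1 - a•T) * (1 - b•T) = 1 - (a+b)•T + (a*b)•(T*T) := by
  simp only [sub_mul, mul_sub, one_mul, mul_one, smul_mul_assoc, mul_smul_comm, smul_smul, add_smul]
  module

lemma expand3 (T : E →L[ℂ] E) (a b c : ℂ) :
    (1 - a•T) * ((1 - b•T) * (1 - c•T)) =
    1 - (a+b+c)•T + (a*b+a*c+b*c)•(T*T) - (a*b*c)•(T*(T*T)) := by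
  simp only [sub_mul, mul_sub, one_mul, mul_one, smul_mul_assoc, mul_smul_comm, smul_smul,
    add_smul, mul_add, add_mul]
  module

lemma comm2 (T : E →L[ℂ] E) (a b : ℂ) : (1 - a•T) * (1 - b•T) = (1 - b•T) * (1 - a•T) := by
  rw [expand2, expand2, add_comm a b, mul_comm a b]

lemma re_lower (T : E →L[ℂ] E) (hT : ∀ x : E, ‖(inner (𝕜 := ℂ) x (T x))‖ ≤ ‖x‖^2)
    (w : ℂ) (x : E) :
    (1 - ‖w‖) * ‖x‖^2 ≤ (inner (𝕜 := ℂ) x ((1 - w • T) x)).re := by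
  have h1 : (1 - w • T) x = x - w • (T x) := by
    simp [ContinuousLinearMap.sub_apply]
  rw [h1, inner_sub_right, inner_smul_right]
  simp only [Complex.sub_re]
  have h2 : (inner (𝕜 := ℂ) x x).re = ‖x‖^2 := by
    rw [inner_self_eq_norm_sq_to_K]
    simp [← Complex.ofReal_pow]
  have h3 : (w * inner (𝕜 := ℂ) x (T x)).re ≤ ‖w‖ * ‖x‖^2 := by
    calc (w * inner (𝕜 := ℂ) x (T x)).re ≤ ‖(w * inner (𝕜 := ℂ) x (T x))‖ :=
          Complex.re_le_norm _
      _ = ‖w‖ * ‖(inner (𝕜 := ℂ) x (T x))‖ := norm_mul _ _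
      _ ≤ ‖w‖ * ‖x‖^2 := by nlinarith [norm_nonneg w, hT x]
  nlinarith

lemma power3 (T : E →L[ℂ] E) (hT : ∀ x : E, ‖(inner (𝕜 := ℂ) x (T x))‖ ≤ ‖x‖^2)
    (x : E) (hx : ‖x‖ = 1) : ‖(inner (𝕜 := ℂ) x (T (T (T x))))‖ ≤ 1 := by
  apply scalar_bound
  intro z hz
  have habs : ∀ j : ℕ, ‖(om^j * z)‖ = ‖z‖ := by
    intro j; rw [norm_mul, norm_pow, om_abs]; simp
  -- the three factors
  set A0 : E →L[ℂ] E := 1 - z • T with hA0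
  set A1 : E →L[ℂ] E := 1 - (om * z) • T with hA1
  set A2 : E →L[ℂ] E := 1 - (om^2 * z) • T with hA2
  have hinv : ∀ w : ℂ, ‖w‖ = ‖z‖ →
      ∃ S' : E →L[ℂ] E, (∀ y, (1 - w • T) (S' y) = y) ∧ (∀ v, S' ((1 - w • T) v) = v) := by
    intro w hw
    exact exists_inv (1 - w • T) (1 - ‖z‖) (by linarith)
      (fun v => by rw [← hw]; exact re_lower T hT w v)
  obtain ⟨S0, hS0⟩ := hinv z rfl
  obtain ⟨S1, hS1⟩ := hinv (om * z) (by simpa using habs 1)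
  obtain ⟨S2, hS2⟩ := hinv (om^2 * z) (habs 2)
  -- Re nonneg for factors and their inverses
  have hposA : ∀ w : ℂ, ‖w‖ = ‖z‖ →
      ∀ v : E, 0 ≤ (inner (𝕜 := ℂ) v ((1 - w • T) v)).re := by
    intro w hw v
    refine le_trans ?_ (re_lower T hT w v)
    rw [hw]
    have := sq_nonneg ‖v‖
    nlinarith
  have hre0 : ∀ y : E, 0 ≤ (inner (𝕜 := ℂ) y (S0 y)).re :=
    lemD _ S0 (hposA z rfl) hS0.1
  have hre1 : ∀ y : E, 0 ≤ (inner (𝕜 := ℂ) y (S1 y)).re :=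
    lemD _ S1 (hposA (om*z) (by simpa using habs 1)) hS1.1
  have hre2 : ∀ y : E, 0 ≤ (inner (𝕜 := ℂ) y (S2 y)).re :=
    lemD _ S2 (hposA (om^2*z) (habs 2)) hS2.1
  set M : E →L[ℂ] E := (3:ℂ)⁻¹ • (S0 + S1 + S2) with hM
  have hMre : ∀ y : E, 0 ≤ (inner (𝕜 := ℂ) y (M y)).re := by
    intro y
    have : M y = (3:ℂ)⁻¹ • (S0 y + S1 y + S2 y) := by simp [hM]
    rw [this, inner_smul_right, inner_add_right, inner_add_right]
    have h0 := hre0 y; have h1 := hre1 y; have h2 := hre2 y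
    rw [show ((3:ℂ)⁻¹) = ((3⁻¹:ℝ):ℂ) by norm_num, Complex.re_ofReal_mul]
    simp only [Complex.add_re]
    positivity
  -- product identity
  have hP : A0 * (A1 * A2) = 1 - (z^3) • (T*(T*T)) := by
    rw [hA0, hA1, hA2, expand3]
    match_scalars
    · ring
    · linear_combination (-z) * om_sum
    · linear_combination z^2 * om_sum + z^2 * om_cube
    · linear_combination (-(z^3)) * om_cube
  have hS0A : S0 * A0 = 1 := by
    ext v
    simp only [ContinuousLinearMap.mul_apply, ContinuousLinearMap.one_apply, hA0]
    rw [hS0.2 v]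
  have hS1A : S1 * A1 = 1 := by
    ext v
    simp only [ContinuousLinearMap.mul_apply, ContinuousLinearMap.one_apply, hA1]
    rw [hS1.2 v]
  have hS2A : S2 * A2 = 1 := by
    ext v
    simp only [ContinuousLinearMap.mul_apply, ContinuousLinearMap.one_apply, hA2]
    rw [hS2.2 v]
  have hsum3 : A1 * A2 + A0 * A2 + A0 * A1 = (3:ℂ) • 1 := by
    rw [hA0, hA1, hA2, expand2, expand2, expand2]
    match_scalars
    · ring
    · linear_combination (-(2*z)) * om_sum
    · linear_combination z^2 * om_cube + z^2 * om_sum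
  have e1 : A0 * (A1 * A2) = A1 * (A0 * A2) := by
    rw [← mul_assoc, hA0, hA1, comm2, mul_assoc]
  have e2 : A0 * (A1 * A2) = A2 * (A0 * A1) := by
    conv_lhs => rw [hA1, hA2, comm2 T (om*z) (om^2*z)]
    rw [← mul_assoc, hA0, hA2, comm2, mul_assoc]
  have hMP : M * (A0 * (A1 * A2)) = 1 := by
    rw [hM, smul_mul_assoc, add_mul, add_mul]
    rw [show S0 * (A0 * (A1 * A2)) = A1 * A2 by rw [← mul_assoc, hS0A, one_mul]]
    rw [show S1 * (A0 * (A1 * A2)) = A0 * A2 by rw [e1, ← mul_assoc, hS1A, one_mul]]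
    rw [show S2 * (A0 * (A1 * A2)) = A0 * A1 by rw [e2, ← mul_assoc, hS2A, one_mul]]
    rw [hsum3, smul_smul]
    norm_num
  have hfin : ∀ y : E, 0 ≤ (inner (𝕜 := ℂ) y ((A0 * (A1 * A2)) y)).re := by
    refine lemD M (A0 * (A1 * A2)) hMre fun y => ?_
    calc M ((A0 * (A1 * A2)) y) = (M * (A0 * (A1 * A2))) y :=
          (ContinuousLinearMap.mul_apply _ _ _).symm
      _ = y := by rw [hMP]; rfl
  have h4 := hfin x
  rw [hP] at h4
  have h5 : ((1 : E →L[ℂ] E) - z^3 • (T*(T*T))) x = x - z^3 • (T (T (T x))) := by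
    simp [ContinuousLinearMap.sub_apply, ContinuousLinearMap.mul_apply]
  rw [h5, inner_sub_right, inner_smul_right] at h4
  have h6 : (inner (𝕜 := ℂ) x x) = 1 := by
    rw [inner_self_eq_norm_sq_to_K, hx]; norm_num
  rw [h6] at h4
  simp only [Complex.sub_re, Complex.one_re] at h4
  linarith

lemma hT_of_unit (T : E →L[ℂ] E)
    (h : ∀ x : E, ‖x‖ = 1 → ‖(inner (𝕜 := ℂ) x (T x))‖ ≤ 1) :
    ∀ x : E, ‖(inner (𝕜 := ℂ) x (T x))‖ ≤ ‖x‖^2 := by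
  intro x
  rcases eq_or_ne x 0 with rfl | hx
  · simp
  · have hr : 0 < ‖x‖ := norm_pos_iff.mpr hx
    have hrc : ((‖x‖ : ℂ)) ≠ 0 := by
      simpa using hr.ne'
    set y : E := ((‖x‖ : ℂ))⁻¹ • x with hy
    have hyn : ‖y‖ = 1 := by
      rw [hy, norm_smul]
      simp [abs_of_pos hr, inv_mul_cancel₀ hr.ne']
    have hxy : x = ((‖x‖ : ℂ)) • y := by
      rw [hy, smul_smul, mul_inv_cancel₀ hrc, one_smul]
    have hb := h y hyn
    calc ‖(inner (𝕜 := ℂ) x (T x))‖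
        = ‖(inner (𝕜 := ℂ) (((‖x‖ : ℂ)) • y) (T (((‖x‖ : ℂ)) • y)))‖ := by rw [← hxy]
      _ = ‖x‖^2 * ‖(inner (𝕜 := ℂ) y (T y))‖ := by
          rw [map_smul, inner_smul_left, inner_smul_right, norm_mul, norm_mul]
          simp [Complex.norm_real, abs_of_pos hr]
          ring
      _ ≤ ‖x‖^2 * 1 := by nlinarith [sq_nonneg ‖x‖]
      _ = ‖x‖^2 := mul_one _

end SSPaux13

open SSPaux13 in
theorem stmt_13 {N : ℕ} (A : Matrix (Fin N) (Fin N) ℂ) (h : numRad (1 + A) ≤ 1) :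
    numRad (1 + A + (1 / 2 : ℂ) • A ^ 2 + (1 / 6 : ℂ) • A ^ 3) ≤ 1 := by
  unfold numRad at h ⊢
  set B := Matrix.toEuclideanCLM (𝕜 := ℂ) (1 + A) with hB
  have hpt : ∀ x : EuclideanSpace ℂ (Fin N), ‖x‖ = 1 →
      ‖(inner (𝕜 := ℂ) x (B x))‖ ≤ 1 := by
    intro x hx
    have hbdd : BddAbove {r : ℝ | ∃ x : EuclideanSpace ℂ (Fin N), ‖x‖ = 1 ∧
        r = ‖(inner (𝕜 := ℂ) x (Matrix.toEuclideanCLM (𝕜 := ℂ) (1 + A) x))‖} := by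
      refine ⟨‖B‖, ?_⟩
      rintro r ⟨v, hv, rfl⟩
      rw [← hB]
      calc ‖(inner (𝕜 := ℂ) v (B v))‖ = ‖(inner (𝕜 := ℂ) v (B v) : ℂ)‖ := rfl
        _ ≤ ‖v‖ * ‖B v‖ := norm_inner_le_norm _ _
        _ ≤ ‖v‖ * (‖B‖ * ‖v‖) := by
            have := B.le_opNorm v
            nlinarith [norm_nonneg v]
        _ = ‖B‖ := by rw [hv]; ring
    refine le_trans (le_csSup hbdd ⟨x, hx, by rw [← hB]⟩) h
  have hmat : (1 + A + (1/2 : ℂ) • A^2 + (1/6 : ℂ) • A^3) =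
      (3:ℂ)⁻¹ • 1 + (2:ℂ)⁻¹ • (1 + A) + (6:ℂ)⁻¹ • ((1+A) * ((1+A) * (1+A))) := by
    simp only [mul_add, add_mul, one_mul, mul_one, pow_succ, pow_zero, mul_assoc]
    module
  have hclm : Matrix.toEuclideanCLM (𝕜 := ℂ) (1 + A + (1/2 : ℂ) • A^2 + (1/6 : ℂ) • A^3)
      = (3:ℂ)⁻¹ • 1 + (2:ℂ)⁻¹ • B + (6:ℂ)⁻¹ • (B * (B * B)) := by
    rw [hmat, hB]
    simp only [map_add, map_smul, map_mul, map_one]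
  have hcube := power3 B (hT_of_unit B hpt)
  apply Real.sSup_le _ (by norm_num)
  rintro r ⟨x, hx, rfl⟩
  rw [hclm]
  have happ : ((3:ℂ)⁻¹ • 1 + (2:ℂ)⁻¹ • B + (6:ℂ)⁻¹ • (B * (B * B))) x =
      (3:ℂ)⁻¹ • x + (2:ℂ)⁻¹ • (B x) + (6:ℂ)⁻¹ • (B (B (B x))) := by
    simp [ContinuousLinearMap.add_apply, ContinuousLinearMap.smul_apply,
      ContinuousLinearMap.mul_apply]
  rw [happ, inner_add_right, inner_add_right, inner_smul_right, inner_smul_right,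
    inner_smul_right]
  have hxx : (inner (𝕜 := ℂ) x x) = 1 := by
    rw [inner_self_eq_norm_sq_to_K, hx]; norm_num
  rw [hxx, mul_one]
  have hb := hpt x hx
  have hc := hcube x hx
  calc ‖((3:ℂ)⁻¹ + (2:ℂ)⁻¹ * inner (𝕜 := ℂ) x (B x)
        + (6:ℂ)⁻¹ * inner (𝕜 := ℂ) x (B (B (B x))))‖
      ≤ ‖((3:ℂ)⁻¹ + (2:ℂ)⁻¹ * inner (𝕜 := ℂ) x (B x))‖
        + ‖((6:ℂ)⁻¹ * inner (𝕜 := ℂ) x (B (B (B x))))‖ := norm_add_le _ _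
    _ ≤ ‖((3:ℂ)⁻¹)‖ + ‖((2:ℂ)⁻¹ * inner (𝕜 := ℂ) x (B x))‖
        + ‖((6:ℂ)⁻¹ * inner (𝕜 := ℂ) x (B (B (B x))))‖ := by
        have := norm_add_le ((3:ℂ)⁻¹) ((2:ℂ)⁻¹ * inner (𝕜 := ℂ) x (B x))
        linarith
    _ ≤ 1 := by
        rw [norm_mul, norm_mul]
        have e3 : ‖((3:ℂ)⁻¹)‖ = 3⁻¹ := by simp
        have e2 : ‖((2:ℂ)⁻¹)‖ = 2⁻¹ := by simp
        have e6 : ‖((6:ℂ)⁻¹)‖ = 6⁻¹ := by simp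
        rw [e2, e3, e6]
        nlinarith [norm_nonneg (inner (𝕜 := ℂ) x (B x))]
end
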